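/- Let T0, D0, T1, D1, ..., Tn be a string of bowties in a matroid M, where Ti = {a_i, b_i, c_i} is a triangle for each i and Dj = {b_j, c_j, a_{j+1}, b_{j+1}} is a cocircuit for each j < n. Then for all k in {1, 2, ..., n}, the matroid M\c0,c1,...,cn/bn is isomorphic to M\c0,c1,...,c_{k-1}/b_k\a_k,a_{k+1},...,a_n, which is isomorphic to M\c0,c1,...,c_{k-1}/b_{k-1}\a_k,a_{k+1},...,a_n, which in turn is isomorphic to M\a0,a1,...,an/b0. -/

import Mathlib

open Set

namespace MatroidSplitter

variable {α β : Type*}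

/-- A circuit of a matroid: a minimal dependent set. -/
def IsCircuit (M : Matroid α) (C : Set α) : Prop :=
  M.Dep C ∧ ∀ D, D ⊂ C → ¬ M.Dep D

/-- A cocircuit: a circuit of the dual matroid. -/
def IsCocircuit (M : Matroid α) (C : Set α) : Prop := IsCircuit M✶ C

/-- A triangle: a 3-element circuit. -/
def IsTriangle (M : Matroid α) (T : Set α) : Prop := IsCircuit M T ∧ T.encard = 3

/-- A triad: a 3-element cocircuit. -/
def IsTriad (M : Matroid α) (T : Set α) : Prop := IsCocircuit M T ∧ T.encard = 3

/-- Deletion of a set of elements. -/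
def del (M : Matroid α) (D : Set α) : Matroid α := M.restrict (M.E \ D)

/-- Contraction of a set of elements. -/
def con (M : Matroid α) (C : Set α) : Matroid α := (del M✶ C)✶

/-- The extended rank of a set: supremum of cardinalities of independent subsets. -/
noncomputable def eRk (M : Matroid α) (X : Set α) : ℕ∞ :=
  ⨆ I : {I : Set α // M.Indep I ∧ I ⊆ X}, (I : Set α).encard

/-- The extended rank of a matroid. -/
noncomputable def eRank (M : Matroid α) : ℕ∞ := eRk M M.E

/-- `(X, E - X)` is a `k`-separation of `M`:  both sides have at least `k` elements and
`r(X) + r(E - X) ≤ r(M) + k - 1`. -/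
def IsKSeparation (M : Matroid α) (k : ℕ) (X : Set α) : Prop :=
  X ⊆ M.E ∧ (k : ℕ∞) ≤ X.encard ∧ (k : ℕ∞) ≤ (M.E \ X).encard ∧
    eRk M X + eRk M (M.E \ X) ≤ eRank M + (k - 1 : ℕ)

/-- A matroid is `3`-connected if it has no `k`-separation for `k < 3`. -/
def ThreeConnected (M : Matroid α) : Prop :=
  ∀ k : ℕ, k < 3 → ∀ X : Set α, ¬ IsKSeparation M k X

/-- A matroid is internally 4-connected if it is 3-connected and one side of every
3-separation has exactly three elements. -/
def InternallyFourConnected (M : Matroid α) : Prop :=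
  ThreeConnected M ∧ ∀ X : Set α, IsKSeparation M 3 X →
    X.encard = 3 ∨ (M.E \ X).encard = 3

/-- A 4-fan `(x₁,x₂,x₃,x₄)`: four distinct elements with `{x₁,x₂,x₃}` a triangle
and `{x₂,x₃,x₄}` a triad. -/
def IsFan4 (M : Matroid α) (x₁ x₂ x₃ x₄ : α) : Prop :=
  ({x₁, x₂, x₃, x₄} : Set α).encard = 4 ∧
    IsTriangle M {x₁, x₂, x₃} ∧ IsTriad M {x₂, x₃, x₄}

/-- A matroid is `(4,4,S)`-connected if it is 3-connected and one side of every
3-separation is a triangle, a triad, or a 4-element fan. -/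
def FourFourSConnected (M : Matroid α) : Prop :=
  ThreeConnected M ∧ ∀ X : Set α, IsKSeparation M 3 X →
    ∃ Z ∈ ({X, M.E \ X} : Set (Set α)),
      IsTriangle M Z ∨ IsTriad M Z ∨
        ∃ x₁ x₂ x₃ x₄, Z = {x₁, x₂, x₃, x₄} ∧ IsFan4 M x₁ x₂ x₃ x₄

/-- A set is fully closed if it is closed in the matroid and in its dual. -/
def FullyClosed (M : Matroid α) (X : Set α) : Prop :=
  M.closure X ⊆ X ∧ M✶.closure X ⊆ X

/-- The full closure of a set: the smallest fully closed set containing it. -/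
def fcl (M : Matroid α) (X : Set α) : Set α :=
  ⋂₀ {Y | X ∩ M.E ⊆ Y ∧ FullyClosed M Y}

/-- A matroid is sequentially 4-connected if it is 3-connected and every
3-separation has a side whose full closure is the ground set. -/
def SequentiallyFourConnected (M : Matroid α) : Prop :=
  ThreeConnected M ∧ ∀ X : Set α, IsKSeparation M 3 X →
    fcl M X = M.E ∨ fcl M (M.E \ X) = M.E

/-- A binary matroid: every circuit and cocircuit intersect in an even number
of elements. -/
def Binary (M : Matroid α) : Prop :=
  ∀ C K : Set α, IsCircuit M C → IsCocircuit M K → ∃ m : ℕ, (C ∩ K).encard = 2 * m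

/-- An isomorphism between matroids via the map `f`. -/
def IsoMWith (M : Matroid α) (N : Matroid β) (f : α → β) : Prop :=
  Set.BijOn f M.E N.E ∧ ∀ I ⊆ M.E, (M.Indep I ↔ N.Indep (f '' I))

/-- Two matroids are isomorphic. -/
def IsoM (M : Matroid α) (N : Matroid β) : Prop := ∃ f : α → β, IsoMWith M N f

/-- `M` has a minor isomorphic to `N`. -/
def HasMinorIso (M : Matroid α) (N : Matroid β) : Prop :=
  ∃ C D : Set α, IsoM (del (con M C) D) N

/-- A string of bowties `T₀, D₀, T₁, D₁, …, Tₙ` in `M`: triangles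
`Tᵢ = {aᵢ, bᵢ, cᵢ}` and cocircuits `Dⱼ = {bⱼ, cⱼ, aⱼ₊₁, bⱼ₊₁}`, with all elements
distinct except that `a₀` may equal `cₙ`. -/
def BowtieString (M : Matroid α) (n : ℕ) (a b c : ℕ → α) : Prop :=
  1 ≤ n ∧
  (∀ i ≤ n, IsTriangle M {a i, b i, c i}) ∧
  (∀ j < n, IsCocircuit M {b j, c j, a (j+1), b (j+1)}) ∧
  (∀ i ≤ n, ∀ j ≤ n,
    (i ≠ j → a i ≠ a j ∧ b i ≠ b j ∧ c i ≠ c j) ∧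
    a i ≠ b j ∧ b i ≠ c j ∧ (a i ≠ c j ∨ (i = 0 ∧ j = n)))

/-- A ring of bowties: a string of bowties with `n ≥ 2` that wraps around, with all
elements distinct. -/
def BowtieRing (M : Matroid α) (n : ℕ) (a b c : ℕ → α) : Prop :=
  2 ≤ n ∧
  (∀ i ≤ n, IsTriangle M {a i, b i, c i}) ∧
  (∀ j < n, IsCocircuit M {b j, c j, a (j+1), b (j+1)}) ∧
  IsCocircuit M {b n, c n, a 0, b 0} ∧
  (∀ i ≤ n, ∀ j ≤ n,
    (i ≠ j → a i ≠ a j ∧ b i ≠ b j ∧ c i ≠ c j) ∧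
    a i ≠ b j ∧ b i ≠ c j ∧ a i ≠ c j)

end MatroidSplitter

namespace MatroidSplitter

/-- A quasi rotor with central triangle `{x₄,x₅,x₆}` and central element `x₅`. -/
def QuasiRotor {α : Type*} (M : Matroid α) (x₁ x₂ x₃ x₄ x₅ x₆ x₇ x₈ x₉ : α) : Prop :=
  ({x₁, x₂, x₃, x₄, x₅, x₆, x₇, x₈, x₉} : Set α).encard = 9 ∧
  IsTriangle M {x₁, x₂, x₃} ∧ IsTriangle M {x₄, x₅, x₆} ∧ IsTriangle M {x₇, x₈, x₉} ∧
  IsCocircuit M {x₂, x₃, x₄, x₅} ∧ IsCocircuit M {x₅, x₆, x₇, x₈} ∧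
  IsTriangle M {x₃, x₅, x₇}

end MatroidSplitter

namespace MatroidSplitter

open Matroid Set

variable {α β γ : Type*} {M N : Matroid α} {I J C D K X Y : Set α} {e x y z : α}

lemma del_ground (M : Matroid α) (D : Set α) : (del M D).E = M.E \ D := rfl

lemma con_ground (M : Matroid α) (C : Set α) : (con M C).E = M.E \ C := rfl

lemma dual_del (M : Matroid α) (X : Set α) : (del M X)✶ = con M✶ X := by
  rw [con, Matroid.dual_dual]

lemma del_indep_iff : (del M D).Indep I ↔ M.Indep I ∧ Disjoint I D := by
  rw [del, Matroid.restrict_indep_iff, subset_diff]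
  exact ⟨fun ⟨h1, _, h2⟩ => ⟨h1, h2⟩, fun ⟨h1, h2⟩ => ⟨h1, h1.subset_ground, h2⟩⟩

lemma del_del (M : Matroid α) (D₁ D₂ : Set α) : del (del M D₁) D₂ = del M (D₁ ∪ D₂) := by
  show (M ↾ (M.E \ D₁)) ↾ ((M ↾ (M.E \ D₁)).E \ D₂) = M ↾ (M.E \ (D₁ ∪ D₂))
  rw [Matroid.restrict_ground_eq, Matroid.restrict_restrict_eq M diff_subset, diff_diff]

lemma IsCircuit.subset_ground (h : IsCircuit M C) : C ⊆ M.E := h.1.subset_ground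

lemma IsCircuit.ssubset_indep (h : IsCircuit M C) (hD : D ⊂ C) : M.Indep D := by
  by_contra hi
  exact h.2 D hD ⟨hi, hD.subset.trans h.subset_ground⟩

lemma IsCircuit.diff_singleton_indep (h : IsCircuit M C) (he : e ∈ C) : M.Indep (C \ {e}) :=
  h.ssubset_indep (Set.sdiff_singleton_ssubset.mpr he)

lemma IsCircuit.mem_closure_diff_singleton (h : IsCircuit M C) (he : e ∈ C) :
    e ∈ M.closure (C \ {e}) := by
  rw [(h.diff_singleton_indep he).mem_closure_iff]
  left
  rw [insert_diff_singleton, insert_eq_of_mem he]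
  exact h.1

lemma IsCocircuit.not_mem_closure_compl (hK : IsCocircuit M K) (he : e ∈ K) :
    e ∉ M.closure (M.E \ K) := by
  intro hecl
  have hKE : K ⊆ M.E := hK.subset_ground
  have h1 : M✶.Indep (K \ {e}) := hK.diff_singleton_indep he
  have h2 : M.closure (M.E \ (K \ {e})) = M.E :=
    (Matroid.coindep_def.mpr h1).closure_compl
  rw [diff_diff_right, inter_eq_self_of_subset_right (singleton_subset_iff.mpr (hKE he)),
    union_singleton, Matroid.closure_insert_eq_of_mem_closure hecl] at h2
  have h3 : M.Coindep K := (Matroid.coindep_iff_closure_compl_eq_ground hKE).mpr h2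
  exact hK.1.not_indep h3.indep

lemma orthogonality (hC : IsCircuit M C) (hK : IsCocircuit M K)
    (heC : e ∈ C) (heK : e ∈ K) (hsub : C ∩ K ⊆ {e}) : False := by
  have hsub2 : C \ {e} ⊆ M.E \ K := fun x hx =>
    ⟨hC.subset_ground hx.1, fun hxK => hx.2 (hsub (mem_inter hx.1 hxK))⟩
  exact hK.not_mem_closure_compl heK
    (M.closure_subset_closure hsub2 (hC.mem_closure_diff_singleton heC))

lemma exists_circuit_subset_insert (hI : M.Indep I) (heI : e ∉ I) (hecl : e ∈ M.closure I) :
    ∃ C, IsCircuit M C ∧ e ∈ C ∧ C ⊆ insert e I := by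
  classical
  set Js : Set (Set α) := {J | J ⊆ I ∧ e ∈ M.closure J} with hJsdef
  have hIJs : I ∈ Js := ⟨Subset.rfl, hecl⟩
  have hne : Js.Nonempty := ⟨I, hIJs⟩
  set I₀ := ⋂₀ Js with hI₀def
  have hI₀I : I₀ ⊆ I := sInter_subset_of_mem hIJs
  have hecl₀ : e ∈ M.closure I₀ := by
    rw [hI₀def, hI.closure_sInter_eq_biInter_closure_of_forall_subset hne (fun J hJ => hJ.1)]
    exact mem_iInter₂.mpr fun J hJ => hJ.2
  have heI₀ : e ∉ I₀ := fun hh => heI (hI₀I hh)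
  refine ⟨insert e I₀, ⟨?_, ?_⟩, mem_insert _ _, insert_subset_insert hI₀I⟩
  · exact (hI.subset hI₀I).insert_dep_iff.mpr ⟨hecl₀, heI₀⟩
  · intro D hD hDdep
    by_cases heD : e ∈ D
    · have hDe : D \ {e} ⊆ I₀ := by
        intro w hw
        rcases (mem_insert_iff.mp (hD.subset hw.1)) with hh | hh
        · exact absurd hh hw.2
        · exact hh
      obtain ⟨w, hw1, hw2⟩ := exists_of_ssubset hD
      have hwI₀ : w ∈ I₀ := by
        rcases (mem_insert_iff.mp hw1) with hh | hh
        · exact absurd (hh ▸ heD : w ∈ D) hw2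
        · exact hh
      have hind : M.Indep (D \ {e}) := hI.subset (hDe.trans hI₀I)
      have hecls : e ∈ M.closure (D \ {e}) := by
        rw [hind.mem_closure_iff]
        left
        rwa [insert_diff_singleton, insert_eq_of_mem heD]
      have hmem : D \ {e} ∈ Js := ⟨hDe.trans hI₀I, hecls⟩
      exact hw2 ((sInter_subset_of_mem hmem) hwI₀).1
    · have hDI : D ⊆ I₀ := fun w hw =>
        (mem_insert_iff.mp (hD.subset hw)).resolve_left (fun hwe => heD (hwe ▸ hw))
      exact hDdep.not_indep (hI.subset (hDI.trans hI₀I))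

end MatroidSplitter


namespace MatroidSplitter

open Matroid Set

variable {α β γ : Type*} {M N : Matroid α} {I J C D K X Y : Set α} {e x y z : α}

lemma con_indep_iff (hX : X ⊆ M.E) :
    (con M X).Indep I ↔ I ⊆ M.E ∧ Disjoint I X ∧ ∃ J, M.IsBasis J X ∧ M.Indep (I ∪ J) := by
  have hR : (M✶.E \ X : Set α) ⊆ M✶.E := diff_subset
  constructor
  · intro hI
    obtain ⟨hIsub, B, hB, hdj⟩ := Matroid.dual_indep_iff_exists'.mp hI
    rw [del, Matroid.isBase_restrict_iff'] at hB
    rw [Matroid.isBasis'_iff_isBasis hR] at hB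
    obtain ⟨B₁, hB₁, hBeq⟩ := hB.exists_isBase
    have hB' : M✶.IsBasis (B₁ ∩ (M✶.E \ X)) (M✶.E \ X) := by rw [← hBeq]; exact hB
    have hbasis := hB₁.compl_inter_isBasis_of_inter_isBasis hB'
    rw [Matroid.dual_dual] at hbasis
    have hXX : M✶.E \ (M✶.E \ X) = X := diff_diff_cancel_left hX
    rw [hXX] at hbasis
    have hIsub' : I ⊆ M.E \ X := hIsub
    refine ⟨(subset_diff.mp hIsub').1, (subset_diff.mp hIsub').2,
      (M✶.E \ B₁) ∩ X, hbasis, ?_⟩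
    have hBase : M.IsBase (M.E \ B₁) := hB₁.compl_isBase_of_dual
    refine hBase.indep.subset (union_subset ?_ inter_subset_left)
    intro w hwI
    refine ⟨(subset_diff.mp hIsub').1 hwI, fun hwB₁ => ?_⟩
    have hwB : w ∈ B := by rw [hBeq]; exact mem_inter hwB₁ (hIsub' hwI)
    exact (disjoint_left.mp hdj hwI) hwB
  · rintro ⟨hIE, hdjX, J, hJ, hIJ⟩
    obtain ⟨B₀, hB₀, hsubB₀⟩ := hIJ.exists_isBase_superset
    have hBX : J = B₀ ∩ X :=
      hJ.eq_of_subset_indep (hB₀.indep.inter_right X)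
        (subset_inter (subset_union_right.trans hsubB₀) hJ.subset) inter_subset_right
    have hJ' : M.IsBasis (B₀ ∩ X) X := by rw [← hBX]; exact hJ
    have hbasis := hB₀.compl_inter_isBasis_of_inter_isBasis hJ'
    have hBse : (del M✶ X).IsBase ((M.E \ B₀) ∩ (M.E \ X)) :=
      Matroid.isBase_restrict_iff'.mpr ((Matroid.isBasis'_iff_isBasis hR).mpr hbasis)
    exact Matroid.dual_indep_iff_exists'.mpr ⟨subset_diff.mpr ⟨hIE, hdjX⟩,
      (M.E \ B₀) ∩ (M.E \ X), hBse,
      disjoint_left.mpr fun w hwI hwmem => hwmem.1.2 (hsubB₀ (subset_union_left hwI))⟩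

lemma del_con_comm (hC : C ⊆ M.E) (hdj : Disjoint C D) :
    del (con M C) D = con (del M D) C := by
  have hCE' : C ⊆ (del M D).E := subset_diff.mpr ⟨hC, hdj⟩
  refine Matroid.ext_iff_indep.mpr ⟨?_, fun I hI => ?_⟩
  · show (M.E \ C) \ D = (M.E \ D) \ C
    rw [diff_diff, diff_diff, union_comm]
  · rw [del_indep_iff, con_indep_iff hC, con_indep_iff hCE']
    constructor
    · rintro ⟨⟨hIE, hIC, J, hJ, hIJ⟩, hID⟩
      refine ⟨subset_diff.mpr ⟨hIE, hID⟩, hIC, J, ?_, ?_⟩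
      · rw [del, Matroid.isBasis_restrict_iff diff_subset]
        exact ⟨hJ, hCE'⟩
      · rw [del_indep_iff]
        exact ⟨hIJ, disjoint_union_left.mpr ⟨hID, disjoint_of_subset_left hJ.subset hdj⟩⟩
    · rintro ⟨hIE, hIC, J, hJ, hIJ⟩
      rw [del, Matroid.isBasis_restrict_iff diff_subset] at hJ
      rw [del_indep_iff] at hIJ
      exact ⟨⟨(subset_diff.mp hIE).1, hIC, J, hJ.1, hIJ.1⟩, (subset_diff.mp hIE).2⟩

lemma basis_singleton_eq (hy : M.Indep {y}) (hJ : M.IsBasis J {y}) : J = {y} :=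
  hJ.eq_of_subset_indep hy hJ.subset Subset.rfl

lemma con_singleton_indep_iff (hy : M.Indep ({y} : Set α)) :
    (con M {y}).Indep I ↔ I ⊆ M.E ∧ y ∉ I ∧ M.Indep (insert y I) := by
  rw [con_indep_iff hy.subset_ground]
  constructor
  · rintro ⟨h1, h2, J, hJ, hIJ⟩
    rw [basis_singleton_eq hy hJ] at hIJ
    refine ⟨h1, disjoint_singleton_right.mp h2, ?_⟩
    rwa [union_singleton] at hIJ
  · rintro ⟨h1, h2, h3⟩
    refine ⟨h1, disjoint_singleton_right.mpr h2, {y}, hy.isBasis_self, ?_⟩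
    rwa [union_singleton]

lemma tri_con_circuit (hT : IsCircuit M {x, y, z})
    (hxy : x ≠ y) (hyz : y ≠ z) (hxz : x ≠ z) : IsCircuit (con M {y}) {x, z} := by
  have hyi : M.Indep {y} := hT.ssubset_indep (by
    constructor
    · intro w hw; simp at hw; subst hw; simp
    · intro hsub
      have := hsub (show x ∈ ({x, y, z} : Set α) by simp)
      simp at this
      exact hxy this)
  have hE := hT.subset_ground
  have hins : insert y ({x, z} : Set α) = {x, y, z} := by
    ext w; simp; tauto
  constructor
  · constructor
    · rw [con_singleton_indep_iff hyi]
      rintro ⟨_, _, h3⟩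
      rw [hins] at h3
      exact hT.1.not_indep h3
    · intro w hw
      rcases hw with rfl | hw
      · exact ⟨hE (by simp), by simp [hxy]⟩
      · rw [mem_singleton_iff] at hw; subst hw
        exact ⟨hE (by simp), by simp [Ne.symm hyz]⟩
  · intro D' hD' hdep
    apply hdep.not_indep
    rw [con_singleton_indep_iff hyi]
    obtain ⟨w, hw1, hw2⟩ := exists_of_ssubset hD'
    have hDsub : D' ⊆ {x, z} := hD'.subset
    refine ⟨hDsub.trans (fun u hu => ?_), fun hyD => ?_, ?_⟩
    · rcases hu with rfl | hu
      · exact hE (by simp)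
      · rw [mem_singleton_iff] at hu; subst hu; exact hE (by simp)
    · rcases hDsub hyD with hh | hh
      · exact hxy hh.symm
      · rw [mem_singleton_iff] at hh; exact hyz hh
    · refine hT.ssubset_indep ⟨?_, fun hsub => ?_⟩
      · rw [← hins]; exact insert_subset_insert hDsub
      · have hwxyz : w ∈ ({x, y, z} : Set α) := by
          rcases hw1 with rfl | hw1
          · simp
          · rw [mem_singleton_iff] at hw1; subst hw1; simp
        have hwmem : w ∈ insert y D' := hsub hwxyz
        rcases mem_insert_iff.mp hwmem with hh | hh
        · rcases hw1 with rfl | hw1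
          · exact hxy hh
          · rw [mem_singleton_iff] at hw1; subst hw1; exact hyz hh.symm
        · exact hw2 hh

end MatroidSplitter


namespace MatroidSplitter

open Matroid Set

variable {α β γ : Type*} {M N : Matroid α} {I J C D K X Y : Set α} {e x y z : α}

lemma IsoMWith.refl (M : Matroid α) : IsoMWith M M id :=
  ⟨bijOn_id _, by simp⟩

lemma IsoM.refl (M : Matroid α) : IsoM M M := ⟨id, IsoMWith.refl M⟩

lemma IsoM.of_eq {M N : Matroid α} (h : M = N) : IsoM M N := h ▸ IsoM.refl M

lemma IsoMWith.trans {M : Matroid α} {N : Matroid β} {P : Matroid γ} {f : α → β} {g : β → γ}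
    (h1 : IsoMWith M N f) (h2 : IsoMWith N P g) : IsoMWith M P (g ∘ f) := by
  refine ⟨h2.1.comp h1.1, fun I hI => ?_⟩
  have hfI : f '' I ⊆ N.E := (image_mono (f := f) hI).trans h1.1.image_eq.subset
  rw [h1.2 I hI, h2.2 _ hfI, image_comp]

lemma IsoM.trans {M : Matroid α} {N : Matroid β} {P : Matroid γ}
    (h1 : IsoM M N) (h2 : IsoM N P) : IsoM M P := by
  obtain ⟨f, hf⟩ := h1; obtain ⟨g, hg⟩ := h2
  exact ⟨g ∘ f, hf.trans hg⟩

lemma IsoMWith.dual {M : Matroid α} {N : Matroid β} {f : α → β} (h : IsoMWith M N f) :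
    IsoMWith M✶ N✶ f := by
  obtain ⟨hbij, hind⟩ := h
  have himg : ∀ S, S ⊆ N.E → f '' (M.E ∩ f ⁻¹' S) = S := by
    intro S hS
    apply Subset.antisymm
    · rintro w ⟨u, ⟨_, hu2⟩, rfl⟩; exact hu2
    · intro w hw
      obtain ⟨u, hu, rfl⟩ := hbij.surjOn (hS hw)
      exact ⟨u, ⟨hu, hw⟩, rfl⟩
  have hbase : ∀ B, B ⊆ M.E → (M.IsBase B ↔ N.IsBase (f '' B)) := by
    intro B hB
    rw [Matroid.isBase_iff_maximal_indep, Matroid.isBase_iff_maximal_indep]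
    constructor
    · rintro ⟨hBi, hmax⟩
      refine ⟨(hind B hB).mp hBi, fun I' hI' hsub => ?_⟩
      have hI'E : I' ⊆ N.E := hI'.subset_ground
      have hIeq : f '' (M.E ∩ f ⁻¹' I') = I' := himg I' hI'E
      have hMi : M.Indep (M.E ∩ f ⁻¹' I') := by
        rw [hind _ inter_subset_left, hIeq]; exact hI'
      have hBsub : B ⊆ M.E ∩ f ⁻¹' I' := fun u hu => ⟨hB hu, hsub ⟨u, hu, rfl⟩⟩
      have hle := hmax hMi hBsub
      rw [← hIeq]
      exact image_mono (f := f) hle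
    · rintro ⟨hBi, hmax⟩
      refine ⟨(hind B hB).mpr hBi, fun I hI hsub => ?_⟩
      have hIE : I ⊆ M.E := hI.subset_ground
      have hle := hmax ((hind I hIE).mp hI) (image_mono (f := f) hsub)
      intro u hu
      obtain ⟨u', hu', hfu⟩ := hle ⟨u, hu, rfl⟩
      rwa [← hbij.injOn (hB hu') (hIE hu) hfu]
  refine ⟨hbij, fun I hI => ?_⟩
  rw [Matroid.dual_indep_iff_exists', Matroid.dual_indep_iff_exists']
  constructor
  · rintro ⟨hIE, B, hBbase, hdj⟩
    refine ⟨(image_mono (f := f) hIE).trans hbij.image_eq.subset, f '' B,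
      (hbase B hBbase.subset_ground).mp hBbase, ?_⟩
    rw [disjoint_iff_inter_eq_empty, ← hbij.injOn.image_inter hIE hBbase.subset_ground,
      disjoint_iff_inter_eq_empty.mp hdj, image_empty]
  · rintro ⟨hIE', B', hB'base, hdj⟩
    have hB'E : B' ⊆ N.E := hB'base.subset_ground
    refine ⟨hI, M.E ∩ f ⁻¹' B', (hbase _ inter_subset_left).mpr (by rwa [himg B' hB'E]), ?_⟩
    exact disjoint_left.mpr fun u huI huB => disjoint_left.mp hdj ⟨u, huI, rfl⟩ huB.2

lemma parallel_indep_insert (hcirc : IsCircuit N {y, z}) (hyz : y ≠ z)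
    (hI : N.Indep I) (hzI : z ∈ I) (hyI : y ∉ I) : N.Indep (insert y (I \ {z})) := by
  have hyE : y ∈ N.E := hcirc.subset_ground (by simp)
  have hIz : N.Indep (I \ {z}) := hI.subset diff_subset
  have hycl : y ∉ N.closure (I \ {z}) := by
    intro hy
    have hzy : z ∈ N.closure {y} := by
      have := hcirc.mem_closure_diff_singleton (e := z) (by simp)
      rwa [pair_diff_right hyz] at this
    have h1 : N.closure {y} ⊆ N.closure (I \ {z}) :=
      N.closure_subset_closure_of_subset_closure (singleton_subset_iff.mpr hy)
    exact hI.notMem_closure_diff_of_mem hzI (h1 hzy)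
  rw [hIz.insert_indep_iff_of_notMem (fun hh => hyI hh.1)]
  exact ⟨hyE, hycl⟩

lemma parallel_swap_iso [DecidableEq α] (hcirc : IsCircuit N {y, z}) (hyz : y ≠ z) :
    IsoMWith (del N {y}) (del N {z}) (Equiv.swap y z) := by
  have hyE : y ∈ N.E := hcirc.subset_ground (by simp)
  have hzE : z ∈ N.E := hcirc.subset_ground (by simp)
  have hmem : ∀ u v : α, u ∈ N.E → v ∈ N.E → u ≠ v →
      ∀ w ∈ N.E \ {u}, Equiv.swap u v w ∈ N.E \ {v} := by
    intro u v huE hvE huv w hw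
    rcases eq_or_ne w v with rfl | hwv
    · rw [Equiv.swap_apply_right]
      exact ⟨huE, by simpa using huv⟩
    · rw [Equiv.swap_apply_of_ne_of_ne (fun hh => hw.2 hh) hwv]
      exact ⟨hw.1, by simpa using hwv⟩
  constructor
  · refine ⟨fun w hw => hmem y z hyE hzE hyz w hw, (Equiv.injective _).injOn, ?_⟩
    intro w hw
    refine ⟨Equiv.swap y z w, ?_, Equiv.swap_apply_self _ _ _⟩
    rw [Equiv.swap_comm]
    exact hmem z y hzE hyE hyz.symm w hw
  · intro I hI
    have hyI : y ∉ I := fun hh => (hI hh).2 rfl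
    by_cases hzI : z ∈ I
    · have himg : Equiv.swap y z '' I = insert y (I \ {z}) := by
        ext w
        simp only [mem_image, mem_insert_iff, mem_diff, mem_singleton_iff]
        constructor
        · rintro ⟨v, hv, rfl⟩
          rcases eq_or_ne v z with rfl | hvz
          · left; exact Equiv.swap_apply_right _ _
          · have hvy : v ≠ y := fun hh => hyI (hh ▸ hv)
            rw [Equiv.swap_apply_of_ne_of_ne hvy hvz]
            exact Or.inr ⟨hv, hvz⟩
        · rintro (rfl | ⟨hw1, hw2⟩)
          · exact ⟨z, hzI, Equiv.swap_apply_right _ _⟩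
          · exact ⟨w, hw1, Equiv.swap_apply_of_ne_of_ne (fun hh => hyI (hh ▸ hw1)) hw2⟩
      rw [himg, del_indep_iff, del_indep_iff]
      constructor
      · rintro ⟨h1, _⟩
        refine ⟨parallel_indep_insert hcirc hyz h1 hzI hyI, ?_⟩
        rw [disjoint_singleton_right]
        rintro (hh | hh)
        · exact hyz hh.symm
        · exact hh.2 rfl
      · rintro ⟨h1, _⟩
        have hcirc' : IsCircuit N {z, y} := by rwa [pair_comm] at hcirc
        have hy' : y ∈ insert y (I \ {z}) := mem_insert _ _
        have hz' : z ∉ insert y (I \ {z}) := by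
          rintro (hh | hh)
          · exact hyz hh.symm
          · exact hh.2 rfl
        have hind := parallel_indep_insert hcirc' hyz.symm h1 hy' hz'
        have heq : insert z ((insert y (I \ {z})) \ {y}) = I := by
          rw [insert_diff_self_of_notMem (fun hh => (hh : y ∈ I \ {z}).2 (by
            exact absurd hh.1 hyI))]
          rw [insert_diff_singleton, insert_eq_of_mem hzI]
        rw [heq] at hind
        exact ⟨hind, disjoint_singleton_right.mpr hyI⟩
    · have himg : Equiv.swap y z '' I = I := by
        have heqon : EqOn (Equiv.swap y z) id I := fun w hw =>
          Equiv.swap_apply_of_ne_of_ne (fun hh => hyI (hh ▸ hw)) (fun hh => hzI (hh ▸ hw))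
        rw [heqon.image_eq, image_id]
      rw [himg, del_indep_iff, del_indep_iff,
        disjoint_singleton_right, disjoint_singleton_right]
      tauto
    
lemma series_swap_iso (hcoc : IsCocircuit N {y, z}) (hyz : y ≠ z) :
    IsoM (con N {y}) (con N {z}) := by
  classical
  exact ⟨Equiv.swap y z, (parallel_swap_iso hcoc hyz).dual⟩

lemma parallel_swap_isoM (hcirc : IsCircuit N {y, z}) (hyz : y ≠ z) :
    IsoM (del N {y}) (del N {z}) := by
  classical
  exact ⟨Equiv.swap y z, parallel_swap_iso hcirc hyz⟩

end MatroidSplitter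


namespace MatroidSplitter

open Matroid Set

variable {α : Type*} {M : Matroid α}

lemma Iio_succ_nat (j : ℕ) : Iio (j+1) = insert j (Iio j) := by
  ext m; simp only [mem_Iio, mem_insert_iff]; omega

lemma Icc_insert_nat {j n : ℕ} (hjn : j ≤ n) : Icc j n = insert j (Icc (j+1) n) := by
  ext m; simp only [mem_Icc, mem_insert_iff]; omega

lemma bowtie_parallel {n : ℕ} {a b c : ℕ → α} (h : BowtieString M n a b c)
    {j : ℕ} (hjn : j ≤ n) :
    IsCircuit (con (del M (c '' Iio j ∪ a '' Icc (j+1) n)) {b j}) {a j, c j} := by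
  obtain ⟨hn, htri, hcoc, hdist⟩ := h
  set Y := c '' Iio j ∪ a '' Icc (j+1) n with hYdef
  have hTM := (htri j hjn).1
  have hTY : ∀ w ∈ ({a j, b j, c j} : Set α), w ∉ Y := by
    intro w hw hwY
    simp only [mem_insert_iff, mem_singleton_iff] at hw
    rcases hwY with ⟨m, hm, heq⟩ | ⟨m, hm, heq⟩
    · have hm' : m < j := mem_Iio.mp hm
      have hmn : m ≤ n := by omega
      rcases hw with rfl | rfl | rfl
      · exact ((hdist j hjn m hmn).2.2.2).resolve_right (by omega) heq.symm
      · exact (hdist j hjn m hmn).2.2.1 heq.symm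
      · exact ((hdist m hmn j hjn).1 (by omega)).2.2 heq
    · have hm' := mem_Icc.mp hm
      rcases hw with rfl | rfl | rfl
      · exact ((hdist m hm'.2 j hjn).1 (by omega)).1 heq
      · exact (hdist m hm'.2 j hjn).2.1 heq
      · exact ((hdist m hm'.2 j hjn).2.2.2).resolve_right (by omega) heq
  have hT : IsCircuit (del M Y) {a j, b j, c j} := by
    constructor
    · rw [del, Matroid.restrict_dep_iff]
      exact ⟨hTM.1.not_indep, fun w hw => ⟨hTM.1.subset_ground hw, hTY w hw⟩⟩
    · intro D' hD' hdep
      rw [del, Matroid.restrict_dep_iff] at hdep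
      exact hTM.2 D' hD' ⟨hdep.1, hD'.subset.trans hTM.subset_ground⟩
  have hab : a j ≠ b j := (hdist j hjn j hjn).2.1
  have hbc : b j ≠ c j := (hdist j hjn j hjn).2.2.1
  have hac : a j ≠ c j := ((hdist j hjn j hjn).2.2.2).resolve_right (by omega)
  exact tri_con_circuit hT hab hbc hac

lemma bowtie_par_iso {n : ℕ} {a b c : ℕ → α} (h : BowtieString M n a b c)
    {j : ℕ} (hjn : j ≤ n) :
    IsoM (con (del M (c '' Iio (j+1) ∪ a '' Icc (j+1) n)) {b j})
         (con (del M (c '' Iio j ∪ a '' Icc j n)) {b j}) := by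
  have hcir := bowtie_parallel h hjn
  obtain ⟨hn, htri, hcoc, hdist⟩ := h
  set Y := c '' Iio j ∪ a '' Icc (j+1) n with hYdef
  have hbjE : b j ∈ M.E := (htri j hjn).1.subset_ground (by simp)
  have hbjY : b j ∉ Y := by
    rintro (⟨m, hm, heq⟩ | ⟨m, hm, heq⟩)
    · exact (hdist j hjn m (by have := mem_Iio.mp hm; omega)).2.2.1 heq.symm
    · exact (hdist m (mem_Icc.mp hm).2 j hjn).2.1 heq
  have hbj_sub : ({b j} : Set α) ⊆ (del M Y).E := by
    rw [singleton_subset_iff]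
    exact ⟨hbjE, hbjY⟩
  have e1 : del (con (del M Y) {b j}) {c j}
      = con (del M (c '' Iio (j+1) ∪ a '' Icc (j+1) n)) {b j} := by
    rw [del_con_comm hbj_sub (disjoint_singleton.mpr ((hdist j hjn j hjn).2.2.1)), del_del]
    have hset : Y ∪ {c j} = c '' Iio (j+1) ∪ a '' Icc (j+1) n := by
      rw [hYdef, Iio_succ_nat j, image_insert_eq]
      ext w
      simp only [mem_union, mem_insert_iff, mem_singleton_iff]
      tauto
    rw [hset]
  have e2 : del (con (del M Y) {b j}) {a j}
      = con (del M (c '' Iio j ∪ a '' Icc j n)) {b j} := by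
    rw [del_con_comm hbj_sub (disjoint_singleton.mpr ((hdist j hjn j hjn).2.1).symm), del_del]
    have hset : Y ∪ {a j} = c '' Iio j ∪ a '' Icc j n := by
      rw [hYdef, Icc_insert_nat hjn, image_insert_eq]
      ext w
      simp only [mem_union, mem_insert_iff, mem_singleton_iff]
      tauto
    rw [hset]
  have hca : c j ≠ a j := (((hdist j hjn j hjn).2.2.2).resolve_right (by omega)).symm
  rw [pair_comm] at hcir
  have hiso := parallel_swap_isoM hcir hca
  rw [e1, e2] at hiso
  exact hiso

lemma bowtie_series {n : ℕ} {a b c : ℕ → α} (h : BowtieString M n a b c)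
    {j : ℕ} (hj1 : 1 ≤ j) (hjn : j ≤ n) :
    IsCocircuit (del M (c '' Iio j ∪ a '' Icc j n)) {b (j-1), b j} := by
  obtain ⟨hn, htri, hcoc, hdist⟩ := h
  obtain ⟨i, rfl⟩ : ∃ i, j = i + 1 := ⟨j - 1, by omega⟩
  have hin : i ≤ n := by omega
  have hi1n : i + 1 ≤ n := hjn
  simp only [Nat.add_sub_cancel]
  set X := c '' Iio (i+1) ∪ a '' Icc (i+1) n with hXdef
  have hac' : ∀ p, p ≤ n → ∀ q, q ≤ n → ¬(p = 0 ∧ q = n) → a p ≠ c q := fun p hp q hq hpq =>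
    ((hdist p hp q hq).2.2.2).resolve_right hpq
  have hab' : ∀ p, p ≤ n → ∀ q, q ≤ n → a p ≠ b q := fun p hp q hq => (hdist p hp q hq).2.1
  have hbc' : ∀ p, p ≤ n → ∀ q, q ≤ n → b p ≠ c q := fun p hp q hq => (hdist p hp q hq).2.2.1
  have haa : ∀ p, p ≤ n → ∀ q, q ≤ n → p ≠ q → a p ≠ a q := fun p hp q hq hpq =>
    ((hdist p hp q hq).1 hpq).1
  have hbb : ∀ p, p ≤ n → ∀ q, q ≤ n → p ≠ q → b p ≠ b q := fun p hp q hq hpq =>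
    ((hdist p hp q hq).1 hpq).2.1
  have hcc : ∀ p, p ≤ n → ∀ q, q ≤ n → p ≠ q → c p ≠ c q := fun p hp q hq hpq =>
    ((hdist p hp q hq).1 hpq).2.2
  have hTE : ∀ m, m ≤ n → ({a m, b m, c m} : Set α) ⊆ M.E := fun m hm =>
    (htri m hm).1.subset_ground
  have hbX : ∀ m, m ≤ n → b m ∉ X := by
    rintro m hm (⟨l, hl, heq⟩ | ⟨l, hl, heq⟩)
    · exact hbc' m hm l (by have := mem_Iio.mp hl; omega) heq.symm
    · exact hab' l (mem_Icc.mp hl).2 m hm heq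
  have hcX : ∀ m, m ≤ n → c m ∈ X → m ≤ i := by
    rintro m hm (⟨l, hl, heq⟩ | ⟨l, hl, heq⟩)
    · have hl' : l ≤ i := Nat.le_of_lt_succ (mem_Iio.mp hl)
      rcases eq_or_ne l m with rfl | hne
      · exact hl'
      · exact absurd heq (hcc l (by omega) m hm hne)
    · exfalso
      have hl' := mem_Icc.mp hl
      exact hac' l hl'.2 m hm (by omega) heq
  have haX : ∀ m, m ≤ n → a m ∈ X → i + 1 ≤ m := by
    rintro m hm (⟨l, hl, heq⟩ | ⟨l, hl, heq⟩)
    · exfalso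
      have hl' : l ≤ i := Nat.le_of_lt_succ (mem_Iio.mp hl)
      exact hac' m hm l (by omega) (by omega) heq.symm
    · have hl' := mem_Icc.mp hl
      rcases eq_or_ne l m with rfl | hne
      · exact hl'.1
      · exact absurd heq (haa l hl'.2 m hm hne)
  have hciX : c i ∈ X := Or.inl ⟨i, mem_Iio.mpr (by omega), rfl⟩
  have hai1X : a (i+1) ∈ X := Or.inr ⟨i+1, mem_Icc.mpr ⟨le_rfl, hi1n⟩, rfl⟩
  have hXE : X ⊆ M✶.E := by
    rintro w (⟨l, hl, rfl⟩ | ⟨l, hl, rfl⟩)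
    · exact hTE l (by have := mem_Iio.mp hl; omega) (by simp)
    · exact hTE l (mem_Icc.mp hl).2 (by simp)
  have hD : IsCircuit M✶ {b i, c i, a (i+1), b (i+1)} := hcoc i (by omega)
  have hbiE : b i ∈ M.E := hTE i hin (by simp)
  have hbi1E : b (i+1) ∈ M.E := hTE (i+1) hi1n (by simp)
  have hbne : b i ≠ b (i+1) := hbb i hin (i+1) hi1n (by omega)
  have hkey : ∀ y, y = b i ∨ y = b (i+1) → y ∉ M✶.closure X := by
    rintro y hy hycl
    obtain ⟨J, hJ⟩ := M✶.exists_isBasis X hXE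
    have hyX : y ∉ X := by rcases hy with rfl | rfl; exacts [hbX i hin, hbX (i+1) hi1n]
    have hyJ : y ∉ J := fun hh => hyX (hJ.subset hh)
    rw [← hJ.closure_eq_closure] at hycl
    obtain ⟨K, hK, hyK, hKsub⟩ := exists_circuit_subset_insert hJ.indep hyJ hycl
    have hKsub' : K ⊆ insert y X := hKsub.trans (insert_subset_insert hJ.subset)
    have hbK : ∀ m, m ≤ n → b m ∈ K → b m = y := by
      intro m hm hmK
      rcases mem_insert_iff.mp (hKsub' hmK) with hh | hh
      · exact hh
      · exact absurd hh (hbX m hm)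
    rcases hy with rfl | rfl
    · have hKsub2 : K ⊆ {b i, c i} := by
        intro w hwK
        rcases mem_insert_iff.mp (hKsub' hwK) with rfl | hwX
        · exact Or.inl rfl
        · rcases hwX with ⟨m, hm, rfl⟩ | ⟨m, hm, rfl⟩
          · have hmi : m ≤ i := Nat.le_of_lt_succ (mem_Iio.mp hm)
            have hmn : m ≤ n := by omega
            rcases eq_or_ne m i with rfl | hmne
            · exact Or.inr rfl
            · exfalso
              refine orthogonality (htri m hmn).1 hK (e := c m) (by simp) hwK ?_
              rintro v ⟨hv1, hv2⟩
              simp only [mem_insert_iff, mem_singleton_iff] at hv1 ⊢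
              rcases hv1 with rfl | rfl | rfl
              · exfalso
                rcases mem_insert_iff.mp (hKsub' hv2) with hh | hh
                · exact hab' m hmn i hin hh
                · have := haX m hmn hh; omega
              · exact absurd (hbK m hmn hv2) (hbb m hmn i hin (by omega))
              · rfl
          · have hm' := mem_Icc.mp hm
            exfalso
            refine orthogonality (htri m hm'.2).1 hK (e := a m) (by simp) hwK ?_
            rintro v ⟨hv1, hv2⟩
            simp only [mem_insert_iff, mem_singleton_iff] at hv1 ⊢
            rcases hv1 with rfl | rfl | rfl
            · rfl
            · exact absurd (hbK m hm'.2 hv2) (hbb m hm'.2 i hin (by omega))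
            · exfalso
              rcases mem_insert_iff.mp (hKsub' hv2) with hh | hh
              · exact hbc' i hin m hm'.2 hh.symm
              · have := hcX m hm'.2 hh; omega
      refine hD.2 K ⟨hKsub2.trans ?_, fun hDK => ?_⟩ hK.1
      · intro w hw
        rcases mem_insert_iff.mp hw with rfl | hw
        · simp
        · rw [mem_singleton_iff] at hw; subst hw; simp
      · have hmem : a (i+1) ∈ K := hDK (by simp)
        rcases mem_insert_iff.mp (hKsub2 hmem) with hh | hh
        · exact hab' (i+1) hi1n i hin hh
        · rw [mem_singleton_iff] at hh
          exact hac' (i+1) hi1n i hin (by omega) hh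
    · have hKsub2 : K ⊆ {a (i+1), b (i+1)} := by
        intro w hwK
        rcases mem_insert_iff.mp (hKsub' hwK) with rfl | hwX
        · exact Or.inr rfl
        · rcases hwX with ⟨m, hm, rfl⟩ | ⟨m, hm, rfl⟩
          · have hmi : m ≤ i := Nat.le_of_lt_succ (mem_Iio.mp hm)
            have hmn : m ≤ n := by omega
            exfalso
            refine orthogonality (htri m hmn).1 hK (e := c m) (by simp) hwK ?_
            rintro v ⟨hv1, hv2⟩
            simp only [mem_insert_iff, mem_singleton_iff] at hv1 ⊢
            rcases hv1 with rfl | rfl | rfl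
            · exfalso
              rcases mem_insert_iff.mp (hKsub' hv2) with hh | hh
              · exact hab' m hmn (i+1) hi1n hh
              · have := haX m hmn hh; omega
            · exact absurd (hbK m hmn hv2) (hbb m hmn (i+1) hi1n (by omega))
            · rfl
          · have hm' := mem_Icc.mp hm
            rcases eq_or_ne m (i+1) with rfl | hmne
            · exact Or.inl rfl
            · exfalso
              refine orthogonality (htri m hm'.2).1 hK (e := a m) (by simp) hwK ?_
              rintro v ⟨hv1, hv2⟩
              simp only [mem_insert_iff, mem_singleton_iff] at hv1 ⊢
              rcases hv1 with rfl | rfl | rfl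
              · rfl
              · exact absurd (hbK m hm'.2 hv2) (hbb m hm'.2 (i+1) hi1n hmne)
              · exfalso
                rcases mem_insert_iff.mp (hKsub' hv2) with hh | hh
                · exact hbc' (i+1) hi1n m hm'.2 hh.symm
                · have := hcX m hm'.2 hh; omega
      refine hD.2 K ⟨hKsub2.trans ?_, fun hDK => ?_⟩ hK.1
      · intro w hw
        rcases mem_insert_iff.mp hw with rfl | hw
        · simp
        · rw [mem_singleton_iff] at hw; subst hw; simp
      · have hmem : c i ∈ K := hDK (by simp)
        rcases mem_insert_iff.mp (hKsub2 hmem) with hh | hh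
        · exact hac' (i+1) hi1n i hin (by omega) hh.symm
        · rw [mem_singleton_iff] at hh
          exact hbc' (i+1) hi1n i hin hh.symm
  show IsCircuit (del M X)✶ {b i, b (i+1)}
  rw [dual_del]
  constructor
  · refine ⟨?_, ?_⟩
    · intro hind
      rw [con_indep_iff hXE] at hind
      obtain ⟨hsubE, hdj, J, hJ, hIJ⟩ := hind
      have h1 : b (i+1) ∈ M✶.closure ({b i, c i, a (i+1), b (i+1)} \ {b (i+1)}) :=
        hD.mem_closure_diff_singleton (by simp)
      have h2 : ({b i, c i, a (i+1), b (i+1)} : Set α) \ {b (i+1)} ⊆ {b i} ∪ X := by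
        rintro w ⟨hw1, hw2⟩
        rw [mem_singleton_iff] at hw2
        simp only [mem_insert_iff, mem_singleton_iff] at hw1
        rcases hw1 with rfl | rfl | rfl | rfl
        · exact Or.inl rfl
        · exact Or.inr hciX
        · exact Or.inr hai1X
        · exact absurd rfl hw2
      have h3 : M✶.closure ({b i} ∪ X) = M✶.closure ({b i} ∪ J) := by
        conv_lhs => rw [← closure_union_closure_right_eq]
        conv_rhs => rw [← closure_union_closure_right_eq]
        rw [hJ.closure_eq_closure]
      have h4 : b (i+1) ∈ M✶.closure ({b i} ∪ J) := by
        rw [← h3]; exact M✶.closure_subset_closure h2 h1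
      have h5 : M✶.Indep ({b i} ∪ J) := hIJ.subset (union_subset_union_left J (by
        intro w hw; rw [mem_singleton_iff] at hw; subst hw; simp))
      have h6 : b (i+1) ∉ ({b i} : Set α) ∪ J := by
        rintro (hh | hh)
        · exact hbne (mem_singleton_iff.mp hh).symm
        · exact hbX (i+1) hi1n (hJ.subset hh)
      have h7 : M✶.Dep (insert (b (i+1)) ({b i} ∪ J)) := by
        rcases h5.mem_closure_iff.mp h4 with hdep | hmem
        · exact hdep
        · exact absurd hmem h6
      apply h7.not_indep
      refine hIJ.subset ?_
      intro w hw
      simp only [mem_insert_iff, mem_union, mem_singleton_iff] at hw ⊢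
      tauto
    · intro w hw
      rcases mem_insert_iff.mp hw with rfl | hw
      · exact ⟨hbiE, hbX i hin⟩
      · rw [mem_singleton_iff] at hw; subst hw
        exact ⟨hbi1E, hbX (i+1) hi1n⟩
  · intro D' hD' hdep
    apply hdep.not_indep
    rw [con_indep_iff hXE]
    obtain ⟨J, hJ⟩ := M✶.exists_isBasis X hXE
    obtain ⟨y, hy, hsub⟩ : ∃ y, (y = b i ∨ y = b (i+1)) ∧ D' ⊆ {y} := by
      by_cases h1 : b i ∈ D'
      · refine ⟨b i, Or.inl rfl, fun w hw => ?_⟩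
        rcases mem_insert_iff.mp (hD'.subset hw) with rfl | hw2
        · exact rfl
        · rw [mem_singleton_iff] at hw2; subst hw2
          exfalso
          exact hD'.2 (fun v hv => by
            rcases mem_insert_iff.mp hv with rfl | hv2
            · exact h1
            · rw [mem_singleton_iff] at hv2; subst hv2; exact hw)
      · refine ⟨b (i+1), Or.inr rfl, fun w hw => ?_⟩
        rcases mem_insert_iff.mp (hD'.subset hw) with rfl | hw2
        · exact absurd hw h1
        · exact hw2
    have hyE : y ∈ M✶.E := by rcases hy with rfl | rfl; exacts [hbiE, hbi1E]
    have hyX : y ∉ X := by rcases hy with rfl | rfl; exacts [hbX i hin, hbX (i+1) hi1n]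
    have hyJ : y ∉ J := fun hh => hyX (hJ.subset hh)
    have hycl : y ∉ M✶.closure J := by
      rw [hJ.closure_eq_closure]; exact hkey y hy
    have hind : M✶.Indep (insert y J) := by
      rw [hJ.indep.insert_indep_iff_of_notMem hyJ]
      exact ⟨hyE, hycl⟩
    refine ⟨hsub.trans (singleton_subset_iff.mpr hyE), ?_, J, hJ, ?_⟩
    · exact disjoint_left.mpr fun w hw hwX => hyX ((mem_singleton_iff.mp (hsub hw)) ▸ hwX)
    · exact hind.subset (union_subset
        (hsub.trans (singleton_subset_iff.mpr (mem_insert _ _))) (subset_insert _ _))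

lemma bowtie_ser_iso {n : ℕ} {a b c : ℕ → α} (h : BowtieString M n a b c)
    {j : ℕ} (hj1 : 1 ≤ j) (hjn : j ≤ n) :
    IsoM (con (del M (c '' Iio j ∪ a '' Icc j n)) {b j})
         (con (del M (c '' Iio j ∪ a '' Icc j n)) {b (j-1)}) := by
  have hcc := bowtie_series h hj1 hjn
  have hne : b j ≠ b (j-1) := ((h.2.2.2 j hjn (j-1) (by omega)).1 (by omega)).2.1
  rw [pair_comm] at hcc
  exact series_swap_iso hcc hne

end MatroidSplitter


open MatroidSplitter in
/-- isomorphisms obtained from a string of bowties by trimming. -/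
theorem statement_3 {α : Type*} (M : Matroid α) (n : ℕ) (a b c : ℕ → α)
    (h : BowtieString M n a b c) :
    ∀ k, 1 ≤ k → k ≤ n →
      IsoM (con (del M (c '' Set.Iic n)) {b n})
           (del (con (del M (c '' Set.Iio k)) {b k}) (a '' Set.Icc k n)) ∧
      IsoM (del (con (del M (c '' Set.Iio k)) {b k}) (a '' Set.Icc k n))
           (del (con (del M (c '' Set.Iio k)) {b (k-1)}) (a '' Set.Icc k n)) ∧
      IsoM (del (con (del M (c '' Set.Iio k)) {b (k-1)}) (a '' Set.Icc k n))
           (con (del M (a '' Set.Iic n)) {b 0}) := by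
  intro k hk1 hkn
  classical
  have htri := h.2.1
  have hdist := h.2.2.2
  have hTE : ∀ m, m ≤ n → ({a m, b m, c m} : Set α) ⊆ M.E := fun m hm =>
    (htri m hm).1.subset_ground
  -- chain from B m down to A 0
  have chainG : ∀ m, 1 ≤ m → m ≤ n + 1 →
      IsoM (con (del M (c '' Set.Iio m ∪ a '' Set.Icc m n)) {b (m-1)})
           (con (del M (c '' Set.Iio 0 ∪ a '' Set.Icc 0 n)) {b 0}) := by
    intro m
    induction m with
    | zero => intro h0; omega
    | succ p ih =>
      intro _ hm
      simp only [Nat.add_sub_cancel]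
      rcases Nat.eq_zero_or_pos p with rfl | hp
      · exact bowtie_par_iso h (Nat.zero_le n)
      · have h1 := bowtie_par_iso h (show p ≤ n by omega)
        have h2 := bowtie_ser_iso h hp (show p ≤ n by omega)
        have h3 := ih hp (by omega)
        exact h1.trans (h2.trans h3)
  -- chain from B (n+1) down to B (n+1-t)
  have chainH : ∀ t, t ≤ n - k →
      IsoM (con (del M (c '' Set.Iio (n+1) ∪ a '' Set.Icc (n+1) n)) {b n})
           (con (del M (c '' Set.Iio (n+1-t) ∪ a '' Set.Icc (n+1-t) n)) {b (n+1-t-1)}) := by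
    intro t
    induction t with
    | zero =>
      intro _
      simp only [Nat.sub_zero, Nat.add_sub_cancel]
      exact IsoM.refl _
    | succ t ih =>
      intro ht
      have hiso := ih (by omega)
      have e1 : n + 1 - t = (n - t) + 1 := by omega
      have e2 : n + 1 - (t + 1) = n - t := by omega
      have e3 : n + 1 - t - 1 = n - t := by omega
      rw [e2]
      rw [e3, e1] at hiso
      have h1 := bowtie_par_iso h (show n - t ≤ n by omega)
      have h2 := bowtie_ser_iso h (show 1 ≤ n - t by omega) (show n - t ≤ n by omega)
      exact hiso.trans (h1.trans h2)
  -- set identities for endpoints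
  have hset1 : c '' Set.Iio (n+1) ∪ a '' Set.Icc (n+1) n = c '' Set.Iic n := by
    rw [Set.Icc_eq_empty (by omega), Set.image_empty, Set.union_empty,
      show Set.Iio (n+1) = Set.Iic n from by ext m; simp [Nat.lt_succ_iff]]
  have hset4 : c '' Set.Iio 0 ∪ a '' Set.Icc 0 n = a '' Set.Iic n := by
    rw [show Set.Iio (0:ℕ) = ∅ from by ext m; simp, Set.image_empty, Set.empty_union,
      show Set.Icc 0 n = Set.Iic n from by ext m; simp]
  -- equalities with statement forms
  have hbkE : b k ∈ M.E := hTE k hkn (by simp)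
  have hbk1E : b (k-1) ∈ M.E := hTE (k-1) (by omega) (by simp)
  have hbk_mem : ({b k} : Set α) ⊆ (del M (c '' Set.Iio k)).E := by
    rw [Set.singleton_subset_iff]
    refine ⟨hbkE, ?_⟩
    rintro ⟨m, hm, heq⟩
    exact (hdist k hkn m (by have := Set.mem_Iio.mp hm; omega)).2.2.1 heq.symm
  have hbk1_mem : ({b (k-1)} : Set α) ⊆ (del M (c '' Set.Iio k)).E := by
    rw [Set.singleton_subset_iff]
    refine ⟨hbk1E, ?_⟩
    rintro ⟨m, hm, heq⟩
    exact (hdist (k-1) (by omega) m (by have := Set.mem_Iio.mp hm; omega)).2.2.1 heq.symm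
  have hdjk : Disjoint ({b k} : Set α) (a '' Set.Icc k n) := by
    rw [Set.disjoint_singleton_left]
    rintro ⟨m, hm, heq⟩
    exact (hdist m (Set.mem_Icc.mp hm).2 k hkn).2.1 heq
  have hdjk1 : Disjoint ({b (k-1)} : Set α) (a '' Set.Icc k n) := by
    rw [Set.disjoint_singleton_left]
    rintro ⟨m, hm, heq⟩
    exact (hdist m (Set.mem_Icc.mp hm).2 (k-1) (by omega)).2.1 heq
  have eT2 : del (con (del M (c '' Set.Iio k)) {b k}) (a '' Set.Icc k n)
      = con (del M (c '' Set.Iio k ∪ a '' Set.Icc k n)) {b k} := by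
    rw [del_con_comm hbk_mem hdjk, del_del]
  have eT3 : del (con (del M (c '' Set.Iio k)) {b (k-1)}) (a '' Set.Icc k n)
      = con (del M (c '' Set.Iio k ∪ a '' Set.Icc k n)) {b (k-1)} := by
    rw [del_con_comm hbk1_mem hdjk1, del_del]
  refine ⟨?_, ?_, ?_⟩
  · rw [← hset1, eT2]
    have hH := chainH (n - k) le_rfl
    have e1 : n + 1 - (n - k) = k + 1 := by omega
    rw [e1] at hH
    simp only [Nat.add_sub_cancel] at hH
    exact hH.trans (bowtie_par_iso h hkn)
  · rw [eT2, eT3]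
    exact bowtie_ser_iso h hk1 hkn
  · rw [eT3, ← hset4]
    exact chainG k hk1 (by omega)
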